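/- Let N ≥ 1 and q > 0, q ≠ 1 real. Set D = (K^{1/2} − K^{−1/2})/(q − q^{−1}) and X = E + F. Then the matrix identity D²·X − (q + q^{−1})·D·X·D + X·D² = X holds. That is, in the (N+1)-dimensional irreducible representation of U_q sl₂, the elements D and E+F satisfy the defining relation B_i² B_{i±1} − (q+q^{−1}) B_i B_{i±1} B_i + B_{i±1} B_i² = B_{i±1} of the nonstandard deformation U′_q so₃ of Gavrilik–Klimyk. (Core computation in the proof of Theorem 4.7.) -/

import Mathlib

noncomputable section

/-- The quantum number `[x] = (q^x − q^{−x})/(q − q⁻¹)` for real `x` (real powers). -/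
def qnum (q : ℝ) (x : ℝ) : ℝ := (q ^ x - q ^ (-x)) / (q - q⁻¹)

/-- The matrix of `E` in the `(N+1)`-dimensional irreducible representation of
`U_q sl₂`: `E_{r−1,r} = ([N−r+1]·[r])^{1/2}` for `1 ≤ r ≤ N`. -/
def Emat (q : ℝ) (N : ℕ) : Matrix (Fin (N + 1)) (Fin (N + 1)) ℝ :=
  fun r c => if (c : ℕ) = (r : ℕ) + 1 then
    Real.sqrt (qnum q ((N : ℝ) - (c : ℕ) + 1) * qnum q ((c : ℕ) : ℝ)) else 0

/-- `F = Eᵀ`. -/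
def Fmat (q : ℝ) (N : ℕ) : Matrix (Fin (N + 1)) (Fin (N + 1)) ℝ :=
  Matrix.transpose (Emat q N)

/-- The diagonal matrix `K^{1/2}` with entries `q^{(N−2r)/2}`. -/
def Khalf (q : ℝ) (N : ℕ) : Matrix (Fin (N + 1)) (Fin (N + 1)) ℝ :=
  Matrix.diagonal fun r => q ^ (((N : ℝ) - 2 * (r : ℕ)) / 2)

/-- The diagonal matrix `K^{−1/2}` with entries `q^{−(N−2r)/2}` (the inverse of `K^{1/2}`). -/
def Kneghalf (q : ℝ) (N : ℕ) : Matrix (Fin (N + 1)) (Fin (N + 1)) ℝ :=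
  Matrix.diagonal fun r => q ^ (-(((N : ℝ) - 2 * (r : ℕ)) / 2))

/-- `D = (K^{1/2} − K^{−1/2})/(q − q⁻¹)`. -/
def Dmat (q : ℝ) (N : ℕ) : Matrix (Fin (N + 1)) (Fin (N + 1)) ℝ :=
  (q - q⁻¹)⁻¹ • (Khalf q N - Kneghalf q N)

lemma sub_inv_ne_zero (q : ℝ) (hq0 : 0 < q) (hq1 : q ≠ 1) : q - q⁻¹ ≠ 0 := by
  intro h
  have hq0' : q ≠ 0 := ne_of_gt hq0
  have h2 : q * q = 1 := by field_simp at h; linarith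
  have : (q - 1) * (q + 1) = 0 := by ring_nf; linarith
  rcases mul_eq_zero.mp this with h3 | h3
  · exact hq1 (by linarith)
  · linarith

lemma key_scalar (q : ℝ) (hq0 : 0 < q) (hq1 : q ≠ 1) (a : ℝ) :
    ((q ^ a - q ^ (-a)) * (q - q⁻¹)⁻¹) * ((q ^ a - q ^ (-a)) * (q - q⁻¹)⁻¹)
      - (q + q⁻¹) * (((q ^ a - q ^ (-a)) * (q - q⁻¹)⁻¹) *
        ((q ^ (a - 1) - q ^ (-(a - 1))) * (q - q⁻¹)⁻¹))
      + ((q ^ (a - 1) - q ^ (-(a - 1))) * (q - q⁻¹)⁻¹) *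
        ((q ^ (a - 1) - q ^ (-(a - 1))) * (q - q⁻¹)⁻¹) = 1 := by
  have hq0' : q ≠ 0 := ne_of_gt hq0
  have hs : q - q⁻¹ ≠ 0 := sub_inv_ne_zero q hq0 hq1
  have hu0 : (0:ℝ) < q ^ a := Real.rpow_pos_of_pos hq0 a
  have hu : q ^ a ≠ 0 := ne_of_gt hu0
  have h1 : q ^ (-a) = (q ^ a)⁻¹ := Real.rpow_neg (le_of_lt hq0) a
  have h2 : q ^ (a - 1) = q ^ a / q := by
    rw [Real.rpow_sub hq0, Real.rpow_one]
  have h3 : q ^ (-(a - 1)) = q / q ^ a := by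
    have e : -(a - 1) = 1 - a := by ring
    rw [e, Real.rpow_sub hq0, Real.rpow_one]
  have key0 : (q ^ a - q ^ (-a))^2
      - (q + q⁻¹) * ((q ^ a - q ^ (-a)) * (q ^ (a - 1) - q ^ (-(a - 1))))
      + (q ^ (a - 1) - q ^ (-(a - 1)))^2 = (q - q⁻¹)^2 := by
    rw [h1, h2, h3]
    field_simp
    ring
  calc ((q ^ a - q ^ (-a)) * (q - q⁻¹)⁻¹) * ((q ^ a - q ^ (-a)) * (q - q⁻¹)⁻¹)
      - (q + q⁻¹) * (((q ^ a - q ^ (-a)) * (q - q⁻¹)⁻¹) *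
        ((q ^ (a - 1) - q ^ (-(a - 1))) * (q - q⁻¹)⁻¹))
      + ((q ^ (a - 1) - q ^ (-(a - 1))) * (q - q⁻¹)⁻¹) *
        ((q ^ (a - 1) - q ^ (-(a - 1))) * (q - q⁻¹)⁻¹)
      = ((q ^ a - q ^ (-a))^2
      - (q + q⁻¹) * ((q ^ a - q ^ (-a)) * (q ^ (a - 1) - q ^ (-(a - 1))))
      + (q ^ (a - 1) - q ^ (-(a - 1)))^2) * ((q - q⁻¹)⁻¹)^2 := by ring
    _ = (q - q⁻¹)^2 * ((q - q⁻¹)⁻¹)^2 := by rw [key0]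
    _ = 1 := by
      have hqq : q * q - 1 ≠ 0 := by
        intro h
        apply hs
        have hinv : q⁻¹ = q := by field_simp; linarith
        rw [hinv, sub_self]
      field_simp
      exact div_self (by rw [sq]; exact hqq)

/-- Core computation in the proof of Theorem 4.7: with `D = (K^{1/2} − K^{−1/2})/(q − q⁻¹)`
and `X = E + F`, the relation `D²X − (q+q⁻¹)·DXD + XD² = X` of the nonstandard
deformation `U′_q so₃` holds. -/
theorem D_X_relation (q : ℝ) (hq0 : 0 < q) (hq1 : q ≠ 1) (N : ℕ) (hN : 1 ≤ N) :
    Dmat q N ^ 2 * (Emat q N + Fmat q N) -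
      (q + q⁻¹) • (Dmat q N * (Emat q N + Fmat q N) * Dmat q N) +
      (Emat q N + Fmat q N) * Dmat q N ^ 2 =
      Emat q N + Fmat q N := by
  have hq0' : q ≠ 0 := ne_of_gt hq0
  set d : Fin (N+1) → ℝ := fun r =>
    (q ^ (((N:ℝ) - 2*(r:ℕ))/2) - q ^ (-(((N:ℝ) - 2*(r:ℕ))/2))) * (q - q⁻¹)⁻¹ with hd
  have hD : Dmat q N = Matrix.diagonal d := by
    ext i j
    simp only [Dmat, Khalf, Kneghalf, Matrix.smul_apply, Matrix.sub_apply,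
      Matrix.diagonal_apply, hd]
    split_ifs
    · rw [smul_eq_mul]; ring
    · simp
  have hkey : ∀ i j : Fin (N+1), (j:ℕ) = (i:ℕ) + 1 →
      d i * d i - (q + q⁻¹) * (d i * d j) + d j * d j = 1 := by
    intro i j hij
    have hji : ((j:ℕ):ℝ) = ((i:ℕ):ℝ) + 1 := by exact_mod_cast hij
    have haj : ((N:ℝ) - 2*(j:ℕ))/2 = ((N:ℝ) - 2*(i:ℕ))/2 - 1 := by
      rw [hji]; ring
    have := key_scalar q hq0 hq1 (((N:ℝ) - 2*(i:ℕ))/2)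
    simp only [hd, haj]
    linarith [this]
  ext i j
  rw [hD, sq, Matrix.diagonal_mul_diagonal]
  simp only [Matrix.sub_apply, Matrix.add_apply, Matrix.smul_apply,
    Matrix.diagonal_mul, Matrix.mul_diagonal, smul_eq_mul]
  by_cases h1 : (j:ℕ) = (i:ℕ) + 1
  · have hF : Fmat q N i j = 0 := by
      simp only [Fmat, Matrix.transpose_apply, Emat]
      rw [if_neg]; omega
    have := hkey i j h1
    linear_combination (Emat q N i j + Fmat q N i j) * this
  · by_cases h2 : (i:ℕ) = (j:ℕ) + 1
    · have hE : Emat q N i j = 0 := by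
        simp only [Emat]; rw [if_neg]; omega
      have := hkey j i h2
      linear_combination (Emat q N i j + Fmat q N i j) * this
    · have hE : Emat q N i j = 0 := by
        simp only [Emat]; rw [if_neg h1]
      have hF : Fmat q N i j = 0 := by
        simp only [Fmat, Matrix.transpose_apply, Emat]; rw [if_neg h2]
      rw [hE, hF]; ring
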